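/- Let A ∈ ℝ^{m×n} have full column rank n, b ∈ ℝ^m, c ∈ ℝⁿ, x = (AᵀA)⁻¹(Aᵀb + c), r = b − Ax, A† = (AᵀA)⁻¹Aᵀ. Consider the linear map L: ℝ^{m×n} × ℝ^m × ℝⁿ → ℝⁿ given by L(E, f, g) = (AᵀA)⁻¹Eᵀr − A†Ex + A†f + (AᵀA)⁻¹g. Then the operator norm of L with respect to the norm ‖[E, f, g]‖_F = sqrt(‖E‖_F² + ‖f‖² + ‖g‖²) on the domain and the Euclidean norm on ℝⁿ equals sqrt(‖M̄‖), i.e. sup_{(E,f,g)≠0} ‖L(E,f,g)‖ / ‖[E,f,g]‖_F = sqrt(‖M̄‖), where M̄ = (1 + ‖r‖²)(AᵀA)⁻² + (1 + ‖x‖²)(AᵀA)⁻¹ − 2 sym(B), B = A† r xᵀ (AᵀA)⁻¹, sym(B) = (B + Bᵀ)/2, and ‖M̄‖ is the spectral (Euclidean operator) norm of M̄. -/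
import Mathlib

open Matrix

/-- Euclidean norm of a vector. -/
noncomputable def euclNorm {k : Type*} [Fintype k] (v : k → ℝ) : ℝ :=
  Real.sqrt (∑ i, v i ^ 2)

/-- Frobenius norm of a matrix. -/
noncomputable def frobNorm {k l : Type*} [Fintype k] [Fintype l]
    (M : Matrix k l ℝ) : ℝ :=
  Real.sqrt (∑ i, ∑ j, M i j ^ 2)

/-- Spectral (Euclidean operator) norm of a matrix, as the supremum of
`‖M y‖ / ‖y‖` over nonzero `y`. -/
noncomputable def specNorm {k l : Type*} [Fintype k] [Fintype l]
    (M : Matrix k l ℝ) : ℝ :=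
  sSup {t : ℝ | ∃ y : l → ℝ, y ≠ 0 ∧ t = euclNorm (M *ᵥ y) / euclNorm y}

/-! ### Auxiliary material -/

noncomputable def frobInner {k l : Type*} [Fintype k] [Fintype l]
    (M N : Matrix k l ℝ) : ℝ := ∑ i, ∑ j, M i j * N i j

section aux
variable {k l : Type*} [Fintype k] [Fintype l]

lemma euclNorm_nonneg (v : k → ℝ) : 0 ≤ euclNorm v := Real.sqrt_nonneg _

lemma frobNorm_nonneg (M : Matrix k l ℝ) : 0 ≤ frobNorm M := Real.sqrt_nonneg _

lemma sq_euclNorm (v : k → ℝ) : euclNorm v ^ 2 = v ⬝ᵥ v := by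
  rw [euclNorm, Real.sq_sqrt (by positivity)]
  simp [dotProduct, pow_two]

lemma sq_frobNorm (M : Matrix k l ℝ) : frobNorm M ^ 2 = frobInner M M := by
  rw [frobNorm, Real.sq_sqrt (by positivity)]
  simp [frobInner, pow_two]

lemma euclNorm_eq_zero_iff (v : k → ℝ) : euclNorm v = 0 ↔ v = 0 := by
  rw [euclNorm, Real.sqrt_eq_zero (by positivity)]
  rw [Finset.sum_eq_zero_iff_of_nonneg (fun i _ => sq_nonneg _)]
  constructor
  · intro h; funext i; simpa using h i (Finset.mem_univ i)
  · intro h; subst h; simp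

lemma euclNorm_zero : euclNorm (0 : k → ℝ) = 0 := (euclNorm_eq_zero_iff 0).mpr rfl

lemma euclNorm_pos {v : k → ℝ} (h : v ≠ 0) : 0 < euclNorm v :=
  lt_of_le_of_ne (euclNorm_nonneg v) (fun h' => h ((euclNorm_eq_zero_iff v).mp h'.symm))

lemma frobNorm_eq_zero_iff (M : Matrix k l ℝ) : frobNorm M = 0 ↔ M = 0 := by
  rw [frobNorm, Real.sqrt_eq_zero (by positivity)]
  rw [Finset.sum_eq_zero_iff_of_nonneg (fun i _ => by positivity)]
  constructor
  · intro h
    ext i j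
    have h1 := h i (Finset.mem_univ i)
    have h2 := (Finset.sum_eq_zero_iff_of_nonneg (fun j _ => sq_nonneg _)).mp h1 j
      (Finset.mem_univ j)
    simpa using h2
  · intro h; subst h; simp

lemma dot_le_norms (u v : k → ℝ) : u ⬝ᵥ v ≤ euclNorm u * euclNorm v :=
  Real.sum_mul_le_sqrt_mul_sqrt _ u v

lemma frobInner_le_norms (M N : Matrix k l ℝ) : frobInner M N ≤ frobNorm M * frobNorm N := by
  have h := Real.sum_mul_le_sqrt_mul_sqrt (Finset.univ : Finset (k × l))
    (fun p => M p.1 p.2) (fun p => N p.1 p.2)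
  simpa [frobInner, frobNorm, Fintype.sum_prod_type] using h

lemma mulVec_norm_le (M : Matrix k l ℝ) (y : l → ℝ) :
    euclNorm (M *ᵥ y) ≤ frobNorm M * euclNorm y := by
  rw [← Real.sqrt_mul_self (mul_nonneg (frobNorm_nonneg M) (euclNorm_nonneg y))]
  rw [euclNorm]
  apply Real.sqrt_le_sqrt
  have hrow : ∀ i, (M *ᵥ y) i ^ 2 ≤ (∑ j, M i j ^ 2) * (∑ j, y j ^ 2) := fun i =>
    Finset.sum_mul_sq_le_sq_mul_sq _ _ _
  calc ∑ i, (M *ᵥ y) i ^ 2 ≤ ∑ i, (∑ j, M i j ^ 2) * (∑ j, y j ^ 2) :=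
        Finset.sum_le_sum (fun i _ => hrow i)
    _ = (∑ i, ∑ j, M i j ^ 2) * (∑ j, y j ^ 2) := by rw [Finset.sum_mul]
    _ = frobNorm M * euclNorm y * (frobNorm M * euclNorm y) := by
        rw [frobNorm, euclNorm]
        have h1 : √(∑ i, ∑ j, M i j ^ 2) * √(∑ i, ∑ j, M i j ^ 2)
            = ∑ i, ∑ j, M i j ^ 2 := Real.mul_self_sqrt (by positivity)
        have h2 : √(∑ i, y i ^ 2) * √(∑ i, y i ^ 2) = ∑ i, y i ^ 2 :=
          Real.mul_self_sqrt (by positivity)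
        calc (∑ i, ∑ j, M i j ^ 2) * ∑ j, y j ^ 2
            = (√(∑ i, ∑ j, M i j ^ 2) * √(∑ i, ∑ j, M i j ^ 2))
              * (√(∑ i, y i ^ 2) * √(∑ i, y i ^ 2)) := by rw [h1, h2]
          _ = √(∑ i, ∑ j, M i j ^ 2) * √(∑ i, y i ^ 2)
              * (√(∑ i, ∑ j, M i j ^ 2) * √(∑ i, y i ^ 2)) := by ring

lemma dotTranspose (M : Matrix k l ℝ) (z : l → ℝ) (y : k → ℝ) :
    (M *ᵥ z) ⬝ᵥ y = z ⬝ᵥ (Mᵀ *ᵥ y) := by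
  rw [dotProduct_mulVec, vecMul_transpose, dotProduct_comm]

lemma cs3 (a1 a2 a3 b1 b2 b3 : ℝ) :
    a1 * b1 + a2 * b2 + a3 * b3
      ≤ Real.sqrt (a1 ^ 2 + a2 ^ 2 + a3 ^ 2) * Real.sqrt (b1 ^ 2 + b2 ^ 2 + b3 ^ 2) := by
  have key : (a1 * b1 + a2 * b2 + a3 * b3) ^ 2
      ≤ (a1 ^ 2 + a2 ^ 2 + a3 ^ 2) * (b1 ^ 2 + b2 ^ 2 + b3 ^ 2) := by
    nlinarith [sq_nonneg (a1 * b2 - a2 * b1), sq_nonneg (a1 * b3 - a3 * b1),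
      sq_nonneg (a2 * b3 - a3 * b2)]
  calc a1 * b1 + a2 * b2 + a3 * b3
      ≤ Real.sqrt ((a1 ^ 2 + a2 ^ 2 + a3 ^ 2) * (b1 ^ 2 + b2 ^ 2 + b3 ^ 2)) :=
        Real.le_sqrt_of_sq_le key
    _ = _ := Real.sqrt_mul (by positivity) _

lemma sqrt_ratio (N Y q : ℝ) (hN : 0 < N) (hY : 0 < Y) (hq : 0 < q) (hqN : q ≤ N * Y) :
    Real.sqrt (N / Y) ≤ N / Real.sqrt q := by
  have h1 : Real.sqrt q ≤ Real.sqrt N * Real.sqrt Y := by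
    rw [← Real.sqrt_mul hN.le]; exact Real.sqrt_le_sqrt hqN
  rw [Real.sqrt_div hN.le, div_le_div_iff₀ (Real.sqrt_pos.mpr hY) (Real.sqrt_pos.mpr hq)]
  calc Real.sqrt N * Real.sqrt q ≤ Real.sqrt N * (Real.sqrt N * Real.sqrt Y) := by
        nlinarith [Real.sqrt_nonneg N]
    _ = (Real.sqrt N * Real.sqrt N) * Real.sqrt Y := by ring
    _ = N * Real.sqrt Y := by rw [Real.mul_self_sqrt hN.le]

end aux

section claims
variable {m n : ℕ} (A : Matrix (Fin m) (Fin n) ℝ) (P : Matrix (Fin n) (Fin n) ℝ)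
  (r : Fin m → ℝ) (x : Fin n → ℝ)

lemma claim1 (hPsym : Pᵀ = P) (E : Matrix (Fin m) (Fin n) ℝ) (f : Fin m → ℝ)
    (g : Fin n → ℝ) (y : Fin n → ℝ) :
    (P *ᵥ (Eᵀ *ᵥ r) - (P * Aᵀ) *ᵥ (E *ᵥ x) + (P * Aᵀ) *ᵥ f + P *ᵥ g) ⬝ᵥ y
    = frobInner E (Matrix.of fun i j => r i * (P *ᵥ y) j - (A *ᵥ (P *ᵥ y)) i * x j)
      + f ⬝ᵥ (A *ᵥ (P *ᵥ y)) + g ⬝ᵥ (P *ᵥ y) := by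
  have hPAt : (P * Aᵀ)ᵀ *ᵥ y = A *ᵥ (P *ᵥ y) := by
    rw [transpose_mul, transpose_transpose, hPsym, ← mulVec_mulVec]
  set u := P *ᵥ y with hu
  have t1 : (P *ᵥ (Eᵀ *ᵥ r)) ⬝ᵥ y = ∑ i, ∑ j, E i j * (r i * u j) := by
    rw [dotTranspose, hPsym, ← hu, dotTranspose, transpose_transpose]
    simp only [dotProduct, Matrix.mulVec, Finset.mul_sum]
    exact Finset.sum_congr rfl fun i _ => Finset.sum_congr rfl fun j _ => by ring
  have t2 : ((P * Aᵀ) *ᵥ (E *ᵥ x)) ⬝ᵥ y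
      = ∑ i, ∑ j, E i j * ((A *ᵥ u) i * x j) := by
    rw [dotTranspose, hPAt]
    simp only [dotProduct, Matrix.mulVec, Finset.sum_mul]
    exact Finset.sum_congr rfl fun i _ => Finset.sum_congr rfl fun j _ => by
      rw [← Finset.sum_mul]; ring
  have t3 : ((P * Aᵀ) *ᵥ f) ⬝ᵥ y = f ⬝ᵥ (A *ᵥ u) := by
    rw [dotTranspose, hPAt]
  have t4 : (P *ᵥ g) ⬝ᵥ y = g ⬝ᵥ u := by
    rw [dotTranspose, hPsym]
  rw [add_dotProduct, add_dotProduct, sub_dotProduct, t1, t2, t3, t4]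
  congr 1
  congr 1
  rw [frobInner, ← Finset.sum_sub_distrib]
  refine Finset.sum_congr rfl fun i _ => ?_
  rw [← Finset.sum_sub_distrib]
  exact Finset.sum_congr rfl fun j _ => by simp only [Matrix.of_apply]; ring

lemma vecMulVec_mulVec' (v : Fin m → ℝ) (w u : Fin n → ℝ) :
    vecMulVec v w *ᵥ u = (w ⬝ᵥ u) • v := by
  funext i
  simp only [Matrix.mulVec, vecMulVec_apply, dotProduct, Pi.smul_apply, smul_eq_mul,
    Finset.sum_mul]
  exact Finset.sum_congr rfl fun j _ => by ring

lemma transpose_vecMulVec' (v : Fin m → ℝ) (w : Fin n → ℝ) :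
    (vecMulVec v w)ᵀ = vecMulVec w v := by
  funext j i; simp [vecMulVec_apply, transpose_apply, mul_comm]

lemma claim2 (hPsym : Pᵀ = P) (hPl : P * (Aᵀ * A) = 1) (y : Fin n → ℝ) :
    (P *ᵥ ((Matrix.of fun i j => r i * (P *ᵥ y) j - (A *ᵥ (P *ᵥ y)) i * x j)ᵀ *ᵥ r)
      - (P * Aᵀ) *ᵥ ((Matrix.of fun i j => r i * (P *ᵥ y) j - (A *ᵥ (P *ᵥ y)) i * x j) *ᵥ x)
      + (P * Aᵀ) *ᵥ (A *ᵥ (P *ᵥ y)) + P *ᵥ (P *ᵥ y))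
    = ((1 + r ⬝ᵥ r) • (P * P) + (1 + x ⬝ᵥ x) • P
        - (((P * Aᵀ) * vecMulVec r x * P) + ((P * Aᵀ) * vecMulVec r x * P)ᵀ)) *ᵥ y := by
  set u := P *ᵥ y with hu
  set w := A *ᵥ u with hw
  have hEr : (Matrix.of fun i j => r i * u j - w i * x j)ᵀ *ᵥ r
      = (r ⬝ᵥ r) • u - (r ⬝ᵥ w) • x := by
    funext j
    simp only [Matrix.mulVec, Matrix.transpose_apply, Matrix.of_apply, dotProduct,
      Pi.sub_apply, Pi.smul_apply, smul_eq_mul, sub_mul, Finset.sum_sub_distrib,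
      Finset.sum_mul]
    congr 1
    · exact Finset.sum_congr rfl fun i _ => by ring
    · exact Finset.sum_congr rfl fun i _ => by ring
  have hEx : (Matrix.of fun i j => r i * u j - w i * x j) *ᵥ x
      = (x ⬝ᵥ u) • r - (x ⬝ᵥ x) • w := by
    funext i
    simp only [Matrix.mulVec, Matrix.of_apply, dotProduct, Pi.sub_apply, Pi.smul_apply,
      smul_eq_mul, sub_mul, Finset.sum_sub_distrib, Finset.sum_mul]
    congr 1
    · exact Finset.sum_congr rfl fun j _ => by ring
    · exact Finset.sum_congr rfl fun j _ => by ring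
  have hPAw : (P * Aᵀ) *ᵥ w = u := by
    rw [hw, mulVec_mulVec, Matrix.mul_assoc, hPl, Matrix.one_mulVec]
  have hBy : ((P * Aᵀ) * vecMulVec r x * P) *ᵥ y
      = (x ⬝ᵥ u) • ((P * Aᵀ) *ᵥ r) := by
    rw [← mulVec_mulVec, ← mulVec_mulVec, ← hu, vecMulVec_mulVec', mulVec_smul]
  have hBty : ((P * Aᵀ) * vecMulVec r x * P)ᵀ *ᵥ y = (r ⬝ᵥ w) • (P *ᵥ x) := by
    have hBt : ((P * Aᵀ) * vecMulVec r x * P)ᵀ = P * (vecMulVec x r * (A * P)) := by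
      rw [transpose_mul, transpose_mul, transpose_vecMulVec', hPsym, transpose_mul,
        transpose_transpose, hPsym]
    rw [hBt, ← mulVec_mulVec, ← mulVec_mulVec, ← mulVec_mulVec, ← hu, ← hw,
      vecMulVec_mulVec', mulVec_smul]
  rw [hEr, hEx, mulVec_sub, mulVec_sub, mulVec_smul, mulVec_smul, mulVec_smul, mulVec_smul,
    hPAw, sub_mulVec, add_mulVec, add_mulVec, smul_mulVec, smul_mulVec,
    hBy, hBty, show (P * P) *ᵥ y = P *ᵥ u from by rw [hu, mulVec_mulVec]]
  module

end claims

set_option maxHeartbeats 2000000 in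
/-- Theorem 3.3: structured absolute condition number of `AᵀAx = Aᵀb + c`.
The operator norm of `L(E,f,g) = (AᵀA)⁻¹Eᵀr − A†Ex + A†f + (AᵀA)⁻¹g`, with
`‖[E,f,g]‖_F = sqrt(‖E‖_F² + ‖f‖² + ‖g‖²)` on the domain and the Euclidean norm on the range,
equals `sqrt(‖M̄‖)`, where `M̄ = (1 + ‖r‖²)(AᵀA)⁻² + (1 + ‖x‖²)(AᵀA)⁻¹ − 2 sym(B)` and
`B = A† r xᵀ (AᵀA)⁻¹`. -/
theorem stmt6 {m n : ℕ} (hn : 0 < n) (hmn : n ≤ m)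
    (A : Matrix (Fin m) (Fin n) ℝ) (hA : A.rank = n)
    (b : Fin m → ℝ) (c : Fin n → ℝ)
    (x : Fin n → ℝ) (hx : x = (Aᵀ * A)⁻¹ *ᵥ (Aᵀ *ᵥ b + c))
    (r : Fin m → ℝ) (hr : r = b - A *ᵥ x)
    (B : Matrix (Fin n) (Fin n) ℝ)
    (hB : B = ((Aᵀ * A)⁻¹ * Aᵀ) * vecMulVec r x * (Aᵀ * A)⁻¹)
    (Mbar : Matrix (Fin n) (Fin n) ℝ)
    (hM : Mbar = (1 + euclNorm r ^ 2) • ((Aᵀ * A)⁻¹ * (Aᵀ * A)⁻¹)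
        + (1 + euclNorm x ^ 2) • (Aᵀ * A)⁻¹
        - (2 : ℝ) • ((1 / 2 : ℝ) • (B + Bᵀ))) :
    sSup {t : ℝ | ∃ (E : Matrix (Fin m) (Fin n) ℝ) (f : Fin m → ℝ) (g : Fin n → ℝ),
        ¬(E = 0 ∧ f = 0 ∧ g = 0) ∧
        t = euclNorm ((Aᵀ * A)⁻¹ *ᵥ (Eᵀ *ᵥ r) - ((Aᵀ * A)⁻¹ * Aᵀ) *ᵥ (E *ᵥ x)
              + ((Aᵀ * A)⁻¹ * Aᵀ) *ᵥ f + (Aᵀ * A)⁻¹ *ᵥ g)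
            / Real.sqrt (frobNorm E ^ 2 + euclNorm f ^ 2 + euclNorm g ^ 2)} =
      Real.sqrt (specNorm Mbar) := by
  classical
  -- invertibility of AᵀA
  have hUnit : IsUnit (Aᵀ * A) := by
    rw [← Matrix.mulVec_injective_iff_isUnit]
    have htop : LinearMap.range (Aᵀ * A).mulVecLin = ⊤ := by
      apply Submodule.eq_top_of_finrank_eq
      show (Aᵀ * A).rank = _
      rw [Matrix.rank_transpose_mul_self, hA, Module.finrank_pi]
      simp
    have hsurj : Function.Surjective (Aᵀ * A).mulVecLin := LinearMap.range_eq_top.mp htop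
    have hinj : Function.Injective (Aᵀ * A).mulVecLin :=
      (LinearMap.injective_iff_surjective).mpr hsurj
    intro a a' hab
    have : (Aᵀ * A).mulVecLin a = (Aᵀ * A).mulVecLin a' := by
      rw [Matrix.mulVecLin_apply, Matrix.mulVecLin_apply]; exact hab
    exact hinj this
  have hdet : IsUnit (Aᵀ * A).det := (Matrix.isUnit_iff_isUnit_det _).mp hUnit
  set P := (Aᵀ * A)⁻¹ with hPdef
  have hPl : P * (Aᵀ * A) = 1 := Matrix.nonsing_inv_mul _ hdet
  have hPsym : Pᵀ = P := by
    rw [hPdef, Matrix.transpose_nonsing_inv]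
    congr 1
    rw [Matrix.transpose_mul, Matrix.transpose_transpose]
  -- rewritten form of Mbar
  have hM' : Mbar = (1 + r ⬝ᵥ r) • (P * P) + (1 + x ⬝ᵥ x) • P
      - (((P * Aᵀ) * vecMulVec r x * P) + ((P * Aᵀ) * vecMulVec r x * P)ᵀ) := by
    rw [hM, hB, smul_smul, sq_euclNorm, sq_euclNorm]
    norm_num
  -- the adjoint components
  set Ey : (Fin n → ℝ) → Matrix (Fin m) (Fin n) ℝ :=
    fun y => Matrix.of fun i j => r i * (P *ᵥ y) j - (A *ᵥ (P *ᵥ y)) i * x j with hEy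
  -- claim 2 in terms of Mbar
  have c2 : ∀ y : Fin n → ℝ,
      P *ᵥ ((Ey y)ᵀ *ᵥ r) - (P * Aᵀ) *ᵥ (Ey y *ᵥ x)
        + (P * Aᵀ) *ᵥ (A *ᵥ (P *ᵥ y)) + P *ᵥ (P *ᵥ y) = Mbar *ᵥ y := by
    intro y
    rw [hM', hEy]
    exact claim2 A P r x hPsym hPl y
  -- claim 3
  have c3 : ∀ y : Fin n → ℝ,
      frobNorm (Ey y) ^ 2 + euclNorm (A *ᵥ (P *ᵥ y)) ^ 2 + euclNorm (P *ᵥ y) ^ 2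
        = (Mbar *ᵥ y) ⬝ᵥ y := by
    intro y
    rw [sq_frobNorm, sq_euclNorm, sq_euclNorm, ← c2 y]
    exact (claim1 A P r x hPsym (Ey y) (A *ᵥ (P *ᵥ y)) (P *ᵥ y) y).symm ▸ rfl
  -- the spectral-norm set
  set Tset := {t : ℝ | ∃ y : Fin n → ℝ, y ≠ 0 ∧ t = euclNorm (Mbar *ᵥ y) / euclNorm y}
    with hTset
  have hspec : specNorm Mbar = sSup Tset := rfl
  have hTbdd : BddAbove Tset := by
    refine ⟨frobNorm Mbar, ?_⟩
    rintro t ⟨y, hy, rfl⟩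
    rw [div_le_iff₀ (euclNorm_pos hy)]
    exact mulVec_norm_le Mbar y
  have hone : (fun _ => (1 : ℝ) : Fin n → ℝ) ≠ 0 := by
    intro h
    have := congrFun h ⟨0, hn⟩
    norm_num at this
  have hTne : Tset.Nonempty := ⟨_, ⟨_, hone, rfl⟩⟩
  have hs0 : 0 ≤ specNorm Mbar := by
    rw [hspec]
    refine le_trans ?_ (le_csSup hTbdd ⟨_, hone, rfl⟩)
    exact div_nonneg (euclNorm_nonneg _) (euclNorm_nonneg _)
  have hMy : ∀ y : Fin n → ℝ, euclNorm (Mbar *ᵥ y) ≤ specNorm Mbar * euclNorm y := by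
    intro y
    by_cases hy : y = 0
    · subst hy
      rw [Matrix.mulVec_zero, euclNorm_zero, mul_zero]
    · rw [hspec]
      exact (div_le_iff₀ (euclNorm_pos hy)).mp (le_csSup hTbdd ⟨y, hy, rfl⟩)
  -- the key operator-norm bound
  have hbound : ∀ (E : Matrix (Fin m) (Fin n) ℝ) (f : Fin m → ℝ) (g : Fin n → ℝ),
      euclNorm (P *ᵥ (Eᵀ *ᵥ r) - (P * Aᵀ) *ᵥ (E *ᵥ x) + (P * Aᵀ) *ᵥ f + P *ᵥ g)
        ≤ Real.sqrt (specNorm Mbar)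
          * Real.sqrt (frobNorm E ^ 2 + euclNorm f ^ 2 + euclNorm g ^ 2) := by
    intro E f g
    set z := P *ᵥ (Eᵀ *ᵥ r) - (P * Aᵀ) *ᵥ (E *ᵥ x) + (P * Aᵀ) *ᵥ f + P *ᵥ g with hz
    have h1 : euclNorm z ^ 2
        = frobInner E (Ey z) + f ⬝ᵥ (A *ᵥ (P *ᵥ z)) + g ⬝ᵥ (P *ᵥ z) := by
      rw [sq_euclNorm]
      nth_rewrite 1 [hz]
      exact claim1 A P r x hPsym E f g z
    have h2 : frobInner E (Ey z) + f ⬝ᵥ (A *ᵥ (P *ᵥ z)) + g ⬝ᵥ (P *ᵥ z)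
        ≤ Real.sqrt (frobNorm E ^ 2 + euclNorm f ^ 2 + euclNorm g ^ 2)
          * Real.sqrt (frobNorm (Ey z) ^ 2 + euclNorm (A *ᵥ (P *ᵥ z)) ^ 2
              + euclNorm (P *ᵥ z) ^ 2) := by
      calc frobInner E (Ey z) + f ⬝ᵥ (A *ᵥ (P *ᵥ z)) + g ⬝ᵥ (P *ᵥ z)
          ≤ frobNorm E * frobNorm (Ey z) + euclNorm f * euclNorm (A *ᵥ (P *ᵥ z))
            + euclNorm g * euclNorm (P *ᵥ z) :=
            add_le_add (add_le_add (frobInner_le_norms _ _) (dot_le_norms _ _))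
              (dot_le_norms _ _)
        _ ≤ _ := cs3 _ _ _ _ _ _
    have h5 : Real.sqrt ((Mbar *ᵥ z) ⬝ᵥ z) ≤ Real.sqrt (specNorm Mbar) * euclNorm z := by
      have h4 : (Mbar *ᵥ z) ⬝ᵥ z ≤ specNorm Mbar * euclNorm z ^ 2 := by
        calc (Mbar *ᵥ z) ⬝ᵥ z ≤ euclNorm (Mbar *ᵥ z) * euclNorm z := dot_le_norms _ _
          _ ≤ specNorm Mbar * euclNorm z * euclNorm z :=
              mul_le_mul_of_nonneg_right (hMy z) (euclNorm_nonneg _)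
          _ = specNorm Mbar * euclNorm z ^ 2 := by ring
      calc Real.sqrt ((Mbar *ᵥ z) ⬝ᵥ z)
          ≤ Real.sqrt (specNorm Mbar * euclNorm z ^ 2) := Real.sqrt_le_sqrt h4
        _ = Real.sqrt (specNorm Mbar) * Real.sqrt (euclNorm z ^ 2) := Real.sqrt_mul hs0 _
        _ = Real.sqrt (specNorm Mbar) * euclNorm z := by
            rw [Real.sqrt_sq (euclNorm_nonneg _)]
    have h6 : euclNorm z ^ 2
        ≤ Real.sqrt (frobNorm E ^ 2 + euclNorm f ^ 2 + euclNorm g ^ 2)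
          * (Real.sqrt (specNorm Mbar) * euclNorm z) := by
      calc euclNorm z ^ 2
          = frobInner E (Ey z) + f ⬝ᵥ (A *ᵥ (P *ᵥ z)) + g ⬝ᵥ (P *ᵥ z) := h1
        _ ≤ Real.sqrt (frobNorm E ^ 2 + euclNorm f ^ 2 + euclNorm g ^ 2)
            * Real.sqrt (frobNorm (Ey z) ^ 2 + euclNorm (A *ᵥ (P *ᵥ z)) ^ 2
                + euclNorm (P *ᵥ z) ^ 2) := h2
        _ = Real.sqrt (frobNorm E ^ 2 + euclNorm f ^ 2 + euclNorm g ^ 2)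
            * Real.sqrt ((Mbar *ᵥ z) ⬝ᵥ z) := by rw [c3 z]
        _ ≤ _ := mul_le_mul_of_nonneg_left h5 (Real.sqrt_nonneg _)
    rcases eq_or_lt_of_le (euclNorm_nonneg z) with h0 | h0
    · rw [← h0]
      positivity
    · nlinarith [h6, h0]
  -- the structured set
  set Sset := {t : ℝ | ∃ (E : Matrix (Fin m) (Fin n) ℝ) (f : Fin m → ℝ) (g : Fin n → ℝ),
      ¬(E = 0 ∧ f = 0 ∧ g = 0) ∧
      t = euclNorm (P *ᵥ (Eᵀ *ᵥ r) - (P * Aᵀ) *ᵥ (E *ᵥ x)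
            + (P * Aᵀ) *ᵥ f + P *ᵥ g)
          / Real.sqrt (frobNorm E ^ 2 + euclNorm f ^ 2 + euclNorm g ^ 2)} with hSset
  have hSub : ∀ t ∈ Sset, t ≤ Real.sqrt (specNorm Mbar) := by
    rintro t ⟨E, f, g, hne, rfl⟩
    have hpos : 0 < Real.sqrt (frobNorm E ^ 2 + euclNorm f ^ 2 + euclNorm g ^ 2) := by
      apply Real.sqrt_pos.mpr
      rcases lt_or_eq_of_le (by positivity :
          (0 : ℝ) ≤ frobNorm E ^ 2 + euclNorm f ^ 2 + euclNorm g ^ 2) with h | h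
      · exact h
      · exfalso
        have hE2 : frobNorm E ^ 2 = 0 := by
          nlinarith [sq_nonneg (frobNorm E), sq_nonneg (euclNorm f), sq_nonneg (euclNorm g)]
        have hf2 : euclNorm f ^ 2 = 0 := by
          nlinarith [sq_nonneg (frobNorm E), sq_nonneg (euclNorm f), sq_nonneg (euclNorm g)]
        have hg2 : euclNorm g ^ 2 = 0 := by
          nlinarith [sq_nonneg (frobNorm E), sq_nonneg (euclNorm f), sq_nonneg (euclNorm g)]
        exact hne ⟨(frobNorm_eq_zero_iff E).mp ((pow_eq_zero_iff two_ne_zero).mp hE2),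
          (euclNorm_eq_zero_iff f).mp ((pow_eq_zero_iff two_ne_zero).mp hf2),
          (euclNorm_eq_zero_iff g).mp ((pow_eq_zero_iff two_ne_zero).mp hg2)⟩
    rw [div_le_iff₀ hpos]
    exact hbound E f g
  have hSbdd : BddAbove Sset := ⟨Real.sqrt (specNorm Mbar), fun t ht => hSub t ht⟩
  have hmem0 : euclNorm (P *ᵥ ((0 : Matrix (Fin m) (Fin n) ℝ)ᵀ *ᵥ r)
        - (P * Aᵀ) *ᵥ ((0 : Matrix (Fin m) (Fin n) ℝ) *ᵥ x)
        + (P * Aᵀ) *ᵥ (0 : Fin m → ℝ) + P *ᵥ (fun _ => (1 : ℝ)))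
      / Real.sqrt (frobNorm (0 : Matrix (Fin m) (Fin n) ℝ) ^ 2
          + euclNorm (0 : Fin m → ℝ) ^ 2 + euclNorm (fun _ => (1 : ℝ) : Fin n → ℝ) ^ 2)
      ∈ Sset := by
    refine ⟨0, 0, fun _ => (1 : ℝ), ?_, rfl⟩
    rintro ⟨-, -, hg⟩
    exact hone hg
  have hSne : Sset.Nonempty := ⟨_, hmem0⟩
  have hS0 : 0 ≤ sSup Sset :=
    le_trans (div_nonneg (euclNorm_nonneg _) (Real.sqrt_nonneg _)) (le_csSup hSbdd hmem0)
  -- lower bound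
  have hTle : ∀ t ∈ Tset, t ≤ (sSup Sset) ^ 2 := by
    rintro t ⟨y, hy, rfl⟩
    by_cases hz : Mbar *ᵥ y = 0
    · rw [hz, euclNorm_zero, zero_div]
      positivity
    · have hq0 : 0 ≤ (Mbar *ᵥ y) ⬝ᵥ y := by
        rw [← c3 y]; positivity
      have hqne : (Mbar *ᵥ y) ⬝ᵥ y ≠ 0 := by
        intro h0
        have hsum : frobNorm (Ey y) ^ 2 + euclNorm (A *ᵥ (P *ᵥ y)) ^ 2
            + euclNorm (P *ᵥ y) ^ 2 = 0 := by rw [c3 y]; exact h0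
        have hE2 : frobNorm (Ey y) = 0 := by
          have : frobNorm (Ey y) ^ 2 = 0 := by
            nlinarith [sq_nonneg (frobNorm (Ey y)), sq_nonneg (euclNorm (A *ᵥ (P *ᵥ y))),
              sq_nonneg (euclNorm (P *ᵥ y))]
          exact (pow_eq_zero_iff two_ne_zero).mp this
        have hf2 : euclNorm (A *ᵥ (P *ᵥ y)) = 0 := by
          have : euclNorm (A *ᵥ (P *ᵥ y)) ^ 2 = 0 := by
            nlinarith [sq_nonneg (frobNorm (Ey y)), sq_nonneg (euclNorm (A *ᵥ (P *ᵥ y))),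
              sq_nonneg (euclNorm (P *ᵥ y))]
          exact (pow_eq_zero_iff two_ne_zero).mp this
        have hg2 : euclNorm (P *ᵥ y) = 0 := by
          have : euclNorm (P *ᵥ y) ^ 2 = 0 := by
            nlinarith [sq_nonneg (frobNorm (Ey y)), sq_nonneg (euclNorm (A *ᵥ (P *ᵥ y))),
              sq_nonneg (euclNorm (P *ᵥ y))]
          exact (pow_eq_zero_iff two_ne_zero).mp this
        apply hz
        rw [← c2 y, (frobNorm_eq_zero_iff _).mp hE2, (euclNorm_eq_zero_iff _).mp hf2,
          (euclNorm_eq_zero_iff _).mp hg2]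
        simp
      have hqpos : 0 < (Mbar *ᵥ y) ⬝ᵥ y := lt_of_le_of_ne hq0 (Ne.symm hqne)
      have hmem : euclNorm (Mbar *ᵥ y) / Real.sqrt ((Mbar *ᵥ y) ⬝ᵥ y) ∈ Sset := by
        refine ⟨Ey y, A *ᵥ (P *ᵥ y), P *ᵥ y, ?_, ?_⟩
        · rintro ⟨hE0, hf0, hg0⟩
          apply hqne
          rw [← c3 y, hE0, hf0, hg0]
          simp [frobNorm, euclNorm]
        · rw [c2 y, c3 y]
      have hval : Real.sqrt (euclNorm (Mbar *ᵥ y) / euclNorm y)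
          ≤ euclNorm (Mbar *ᵥ y) / Real.sqrt ((Mbar *ᵥ y) ⬝ᵥ y) :=
        sqrt_ratio _ _ _ (euclNorm_pos hz) (euclNorm_pos hy) hqpos (dot_le_norms _ _)
      have h7 : Real.sqrt (euclNorm (Mbar *ᵥ y) / euclNorm y) ≤ sSup Sset :=
        le_trans hval (le_csSup hSbdd hmem)
      calc euclNorm (Mbar *ᵥ y) / euclNorm y
          = Real.sqrt (euclNorm (Mbar *ᵥ y) / euclNorm y) ^ 2 :=
            (Real.sq_sqrt (div_nonneg (euclNorm_nonneg _) (euclNorm_nonneg _))).symm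
        _ ≤ (sSup Sset) ^ 2 := pow_le_pow_left₀ (Real.sqrt_nonneg _) h7 2
  have hlow : Real.sqrt (specNorm Mbar) ≤ sSup Sset := by
    rw [hspec]
    calc Real.sqrt (sSup Tset) ≤ Real.sqrt ((sSup Sset) ^ 2) :=
          Real.sqrt_le_sqrt (csSup_le hTne hTle)
      _ = sSup Sset := Real.sqrt_sq hS0
  exact le_antisymm (csSup_le hSne hSub) hlow
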